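/- For n ≥ 2, let V be the ℂ-vector space with basis {v_S : S an n-element subset of {1,...,2n-1}} and let φ: V → V be defined by ⟨φ(v_S), v_T⟩ = 1 if S = T, (-1)^d if S ∩ T = {d}, and 0 if S ≠ T and |S ∩ T| ≥ 2. Then the trace of φ equals binomial(2n-1, n), and the trace of φ equals Σ_{i=0}^{n-1} (1 + (n-i)(-1)^{n-i}) · f^{(2^i 1^{2n-1-2i})}, where f^λ denotes the number of standard Young tableaux of shape λ. -/

import Mathlib

/-- The matrix entry `⟨φ(v_S), v_T⟩` of the Jacobi-relation operator `φ` on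
`V_{n,3}`: it is `1` if `S = T`, `(-1)^d` if `S ∩ T = {d}` with `S ≠ T`, and `0`
if `S ≠ T` and `|S ∩ T| ≥ 2`. -/
noncomputable def phiCoeff (S T : Finset ℕ) : ℂ :=
  if S = T then 1
  else if (S ∩ T).card = 1 then ∑ d ∈ S ∩ T, (-1 : ℂ) ^ d
  else 0

/-- The index type: `n`-element subsets of `{1, …, 2n-1}`. -/
abbrev SubsetIdx (n : ℕ) := {S // S ∈ (Finset.Icc 1 (2 * n - 1)).powersetCard n}

/-- The matrix of `φ` in the basis `{v_S}`: `φ(v_S) = ∑_T ⟨φ(v_S), v_T⟩ v_T`. -/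
noncomputable def phiMatrix (n : ℕ) : Matrix (SubsetIdx n) (SubsetIdx n) ℂ :=
  Matrix.of fun T S => phiCoeff S.val T.val

/-- The cells of the two-column Young diagram: `i` rows of length 2 and rows
`i, …, r-1` of length 1. -/
def twoColShape (i r : ℕ) : Finset (ℕ × ℕ) :=
  (Finset.range i ×ˢ Finset.range 2) ∪ ((Finset.Ico i r) ×ˢ {0})

/-- A standard Young tableau on a finite set of cells. -/
def IsSYT (cells : Finset (ℕ × ℕ)) (f : {x // x ∈ cells} → Fin cells.card) : Prop :=
  Function.Bijective f ∧
    (∀ a b : {x // x ∈ cells}, a.val.1 = b.val.1 → a.val.2 < b.val.2 → f a < f b) ∧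
    (∀ a b : {x // x ∈ cells}, a.val.2 = b.val.2 → a.val.1 < b.val.1 → f a < f b)

/-- The number of standard Young tableaux with the given cells; for a partition
shape `λ` this is `f^λ`, the dimension of the Specht module `S^λ`. -/
noncomputable def sytCount (cells : Finset (ℕ × ℕ)) : ℕ :=
  Nat.card {f : {x // x ∈ cells} → Fin cells.card // IsSYT cells f}

open Finset

lemma mem_twoColShape {i r : ℕ} (hir : i ≤ r) {p : ℕ × ℕ} :
    p ∈ twoColShape i r ↔ (p.2 = 0 ∧ p.1 < r) ∨ (p.2 = 1 ∧ p.1 < i) := by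
  obtain ⟨p1, p2⟩ := p
  simp only [twoColShape, mem_union, mem_product, mem_range, mem_Ico, mem_singleton]
  omega

lemma card_twoColShape {i r : ℕ} (hir : i ≤ r) : (twoColShape i r).card = r + i := by
  rw [twoColShape, card_union_of_disjoint, card_product, card_product]
  · simp only [card_range, Nat.card_Ico, card_singleton]; omega
  · rw [disjoint_left]
    rintro ⟨p1, p2⟩ hp hq
    simp only [mem_product, mem_range, mem_Ico] at hp hq
    omega

lemma sytCount_zero (r : ℕ) : sytCount (twoColShape 0 r) = 1 := by
  classical
  have hmem : ∀ p : ℕ × ℕ, p ∈ twoColShape 0 r ↔ p.2 = 0 ∧ p.1 < r := by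
    intro p
    rw [mem_twoColShape (Nat.zero_le r)]
    omega
  have hcard : (twoColShape 0 r).card = r := by
    rw [card_twoColShape (Nat.zero_le r)]
    omega
  rw [sytCount, Nat.card_eq_one_iff_unique]
  have he : ∀ k : Fin (twoColShape 0 r).card, ((k : ℕ), 0) ∈ twoColShape 0 r := by
    intro k
    rw [hmem]
    refine ⟨rfl, ?_⟩
    have := k.2
    omega
  have hesurj : Function.Surjective (fun k : Fin (twoColShape 0 r).card => (⟨((k : ℕ), 0), he k⟩ :
      {x // x ∈ twoColShape 0 r})) := by
    rintro ⟨⟨p1, p2⟩, hx⟩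
    have h := (hmem _).1 hx
    simp only at h
    refine ⟨⟨p1, by omega⟩, Subtype.ext ?_⟩
    simp only
    exact Prod.ext rfl h.1.symm
  constructor
  · constructor
    rintro ⟨f, hf⟩ ⟨g, hg⟩
    apply Subtype.ext
    simp only
    have hu : ∀ (f : {x // x ∈ twoColShape 0 r} → Fin (twoColShape 0 r).card),
        IsSYT (twoColShape 0 r) f →
        StrictMono (fun k : Fin (twoColShape 0 r).card => f ⟨((k : ℕ), 0), he k⟩) := by
      intro f hf k l hkl
      exact hf.2.2 _ _ rfl hkl
    have h1 : Function.Surjective (fun k : Fin (twoColShape 0 r).card => f ⟨((k : ℕ), 0), he k⟩) := by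
      intro y
      obtain ⟨x, hx⟩ := hf.1.2 y
      obtain ⟨k, rfl⟩ := hesurj x
      exact ⟨k, hx⟩
    have h2 : Function.Surjective (fun k : Fin (twoColShape 0 r).card => g ⟨((k : ℕ), 0), he k⟩) := by
      intro y
      obtain ⟨x, hx⟩ := hg.1.2 y
      obtain ⟨k, rfl⟩ := hesurj x
      exact ⟨k, hx⟩
    haveI : WellFoundedLT (Fin (twoColShape 0 r).card) := inferInstance
    have heq := (StrictMono.range_inj (β := Fin (twoColShape 0 r).card)
      (γ := Fin (twoColShape 0 r).card) (hu f hf) (hu g hg)).1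
      (by rw [h1.range_eq, h2.range_eq])
    funext x
    obtain ⟨k, rfl⟩ := hesurj x
    exact congrFun heq k
  · refine ⟨⟨fun x => ⟨x.1.1, ?_⟩, ?_, ?_, ?_⟩⟩
    · have := (hmem x.1).1 x.2
      omega
    · rw [Fintype.bijective_iff_injective_and_card]
      refine ⟨?_, by simp [Fintype.card_coe]⟩
      intro a b hab
      have hv := congrArg Fin.val hab
      simp only at hv
      have ha := (hmem a.1).1 a.2
      have hb := (hmem b.1).1 b.2
      exact Subtype.ext (Prod.ext hv (ha.1.trans hb.1.symm))
    · intro a b h1 h2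
      have ha := (hmem a.1).1 a.2
      have hb := (hmem b.1).1 b.2
      omega
    · intro a b h1 h2
      exact Fin.mk_lt_mk.2 h2

lemma top_loc {i r : ℕ} (h1 : 1 ≤ i) (hir : i ≤ r)
    {f : {x // x ∈ twoColShape i r} → Fin (twoColShape i r).card}
    (hf : IsSYT (twoColShape i r) f)
    (x : {p // p ∈ twoColShape i r}) (hx : (f x : ℕ) = (twoColShape i r).card - 1) :
    x.1 = (i - 1, 1) ∨ (i < r ∧ x.1 = (r - 1, 0)) := by
  have hcard := card_twoColShape hir
  have hle : ∀ y, (f y : ℕ) ≤ (f x : ℕ) := by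
    intro y
    have := (f y).2
    omega
  obtain ⟨⟨p1, p2⟩, hp⟩ := x
  have hm := (mem_twoColShape hir).1 hp
  simp only at hm ⊢
  rcases hm with ⟨h2, h1'⟩ | ⟨h2, h1'⟩
  · right
    have hp1 : p1 = r - 1 := by
      by_contra h
      have hy : ((p1 + 1, 0) : ℕ × ℕ) ∈ twoColShape i r :=
        (mem_twoColShape hir).2 (Or.inl ⟨rfl, by omega⟩)
      have hlt := hf.2.2 ⟨(p1, p2), hp⟩ ⟨(p1 + 1, 0), hy⟩ (by simp [h2]) (by simp)
      rw [Fin.lt_iff_val_lt_val] at hlt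
      have := hle ⟨(p1 + 1, 0), hy⟩
      omega
    have hir2 : i < r := by
      by_contra h
      have hy : ((p1, 1) : ℕ × ℕ) ∈ twoColShape i r :=
        (mem_twoColShape hir).2 (Or.inr ⟨rfl, by omega⟩)
      have hlt := hf.2.1 ⟨(p1, p2), hp⟩ ⟨(p1, 1), hy⟩ rfl (by simp; omega)
      rw [Fin.lt_iff_val_lt_val] at hlt
      have := hle ⟨(p1, 1), hy⟩
      omega
    exact ⟨hir2, by rw [hp1, h2]⟩
  · left
    have hp1 : p1 = i - 1 := by
      by_contra h
      have hy : ((p1 + 1, 1) : ℕ × ℕ) ∈ twoColShape i r :=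
        (mem_twoColShape hir).2 (Or.inr ⟨rfl, by omega⟩)
      have hlt := hf.2.2 ⟨(p1, p2), hp⟩ ⟨(p1 + 1, 1), hy⟩ (by simp [h2]) (by simp)
      rw [Fin.lt_iff_val_lt_val] at hlt
      have := hle ⟨(p1 + 1, 1), hy⟩
      omega
    rw [hp1, h2]

lemma erase_top_col2 {i r : ℕ} (h1 : 1 ≤ i) (hir : i ≤ r) :
    (twoColShape i r).erase (i - 1, 1) = twoColShape (i - 1) r := by
  ext ⟨p1, p2⟩
  rw [mem_erase, mem_twoColShape hir, mem_twoColShape (by omega : i - 1 ≤ r)]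
  simp only [ne_eq, Prod.mk.injEq, not_and]
  omega

lemma erase_top_col1 {i r : ℕ} (hir : i < r) :
    (twoColShape i r).erase (r - 1, 0) = twoColShape i (r - 1) := by
  ext ⟨p1, p2⟩
  rw [mem_erase, mem_twoColShape hir.le, mem_twoColShape (by omega : i ≤ r - 1)]
  simp only [ne_eq, Prod.mk.injEq, not_and]
  omega
section Restrict

variable (cells : Finset (ℕ × ℕ)) (c : ℕ × ℕ) (hc : c ∈ cells)

/-- restriction of a top-at-`c` tableau to `cells.erase c` -/
def resFun (f : {x // x ∈ cells} → Fin cells.card) (hf : IsSYT cells f)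
    (htop : (f ⟨c, hc⟩ : ℕ) = cells.card - 1) :
    {x // x ∈ cells.erase c} → Fin (cells.erase c).card := fun x =>
  ⟨(f ⟨x.1, mem_of_mem_erase x.2⟩ : ℕ), by
    have hN : 1 ≤ cells.card := card_pos.2 ⟨c, hc⟩
    have hM : (cells.erase c).card = cells.card - 1 := card_erase_of_mem hc
    have h1 : (f ⟨x.1, mem_of_mem_erase x.2⟩ : ℕ) < cells.card :=
      (f ⟨x.1, mem_of_mem_erase x.2⟩).2
    have h3 : (f ⟨x.1, mem_of_mem_erase x.2⟩ : ℕ) ≠ cells.card - 1 := by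
      intro h
      have h2 : f ⟨x.1, mem_of_mem_erase x.2⟩ = f ⟨c, hc⟩ := Fin.ext (h.trans htop.symm)
      exact (Finset.ne_of_mem_erase x.2) (congrArg Subtype.val (hf.1.1 h2))
    omega⟩

lemma resFun_isSYT (f : {x // x ∈ cells} → Fin cells.card) (hf : IsSYT cells f)
    (htop : (f ⟨c, hc⟩ : ℕ) = cells.card - 1) :
    IsSYT (cells.erase c) (resFun cells c hc f hf htop) := by
  classical
  constructor
  · rw [Fintype.bijective_iff_injective_and_card]
    constructor
    · intro a b hab
      have hv := congrArg Fin.val hab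
      have h5 : f ⟨a.1, mem_of_mem_erase a.2⟩ = f ⟨b.1, mem_of_mem_erase b.2⟩ :=
        Fin.ext hv
      have h4 := hf.1.1 h5
      have h6 := Subtype.ext_iff.mp h4
      exact Subtype.ext h6
    · simp [Fintype.card_coe]
  · constructor
    · intro a b h1 h2
      exact hf.2.1 ⟨a.1, mem_of_mem_erase a.2⟩ ⟨b.1, mem_of_mem_erase b.2⟩ h1 h2
    · intro a b h1 h2
      exact hf.2.2 ⟨a.1, mem_of_mem_erase a.2⟩ ⟨b.1, mem_of_mem_erase b.2⟩ h1 h2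

/-- extension of a tableau on `cells.erase c` by putting the top value at `c` -/
noncomputable def extFun (g : {x // x ∈ cells.erase c} → Fin (cells.erase c).card) :
    {x // x ∈ cells} → Fin cells.card := by
  classical
  exact fun x =>
    if h : x.1 = c then ⟨cells.card - 1, by
      have hN : 1 ≤ cells.card := card_pos.2 ⟨c, hc⟩; omega⟩
    else ⟨(g ⟨x.1, mem_erase.2 ⟨h, x.2⟩⟩ : ℕ), by
      have hM : (cells.erase c).card = cells.card - 1 := card_erase_of_mem hc
      have hN : 1 ≤ cells.card := card_pos.2 ⟨c, hc⟩
      have := (g ⟨x.1, mem_erase.2 ⟨h, x.2⟩⟩).2; omega⟩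

lemma extFun_top (g : {x // x ∈ cells.erase c} → Fin (cells.erase c).card) :
    (extFun cells c hc g ⟨c, hc⟩ : ℕ) = cells.card - 1 := by
  simp [extFun]

lemma extFun_ne (g : {x // x ∈ cells.erase c} → Fin (cells.erase c).card)
    (x : {x // x ∈ cells}) (hx : x.1 ≠ c) :
    (extFun cells c hc g x : ℕ) = (g ⟨x.1, mem_erase.2 ⟨hx, x.2⟩⟩ : ℕ) := by
  simp [extFun, hx]

lemma extFun_isSYT
    (hmax : ∀ b ∈ cells, ¬ ((b.1 = c.1 ∧ c.2 < b.2) ∨ (b.2 = c.2 ∧ c.1 < b.1)))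
    (g : {x // x ∈ cells.erase c} → Fin (cells.erase c).card)
    (hg : IsSYT (cells.erase c) g) :
    IsSYT cells (extFun cells c hc g) := by
  classical
  have hM : (cells.erase c).card = cells.card - 1 := card_erase_of_mem hc
  have hN : 1 ≤ cells.card := card_pos.2 ⟨c, hc⟩
  constructor
  · rw [Fintype.bijective_iff_injective_and_card]
    refine ⟨?_, by simp [Fintype.card_coe]⟩
    intro a b hab
    have habv : (extFun cells c hc g a : ℕ) = (extFun cells c hc g b : ℕ) :=
      congrArg Fin.val hab
    by_cases ha : a.1 = c <;> by_cases hb : b.1 = c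
    · exact Subtype.ext (ha.trans hb.symm)
    · rw [show a = (⟨c, hc⟩ : {x // x ∈ cells}) from Subtype.ext ha] at habv
      rw [extFun_top, extFun_ne cells c hc g b hb] at habv
      have hb2 := (g ⟨b.1, mem_erase.2 ⟨hb, b.2⟩⟩).2
      omega
    · rw [show b = (⟨c, hc⟩ : {x // x ∈ cells}) from Subtype.ext hb] at habv
      rw [extFun_top, extFun_ne cells c hc g a ha] at habv
      have ha2 := (g ⟨a.1, mem_erase.2 ⟨ha, a.2⟩⟩).2
      omega
    · rw [extFun_ne cells c hc g a ha, extFun_ne cells c hc g b hb] at habv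
      have h5 : g ⟨a.1, mem_erase.2 ⟨ha, a.2⟩⟩ = g ⟨b.1, mem_erase.2 ⟨hb, b.2⟩⟩ :=
        Fin.ext habv
      have h4 := hg.1.1 h5
      have h6 := Subtype.ext_iff.mp h4
      exact Subtype.ext h6
  constructor
  · intro a b h1 h2
    rw [Fin.lt_iff_val_lt_val]
    by_cases ha : a.1 = c
    · rw [ha] at h1 h2
      exact absurd (Or.inl ⟨h1.symm, h2⟩) (hmax b.1 b.2)
    · by_cases hb : b.1 = c
      · rw [show b = (⟨c, hc⟩ : {x // x ∈ cells}) from Subtype.ext hb, extFun_top,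
          extFun_ne cells c hc g a ha]
        have := (g ⟨a.1, mem_erase.2 ⟨ha, a.2⟩⟩).2
        omega
      · rw [extFun_ne cells c hc g a ha, extFun_ne cells c hc g b hb]
        exact hg.2.1 ⟨a.1, mem_erase.2 ⟨ha, a.2⟩⟩ ⟨b.1, mem_erase.2 ⟨hb, b.2⟩⟩ h1 h2
  · intro a b h1 h2
    rw [Fin.lt_iff_val_lt_val]
    by_cases ha : a.1 = c
    · rw [ha] at h1 h2
      exact absurd (Or.inr ⟨h1.symm, h2⟩) (hmax b.1 b.2)
    · by_cases hb : b.1 = c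
      · rw [show b = (⟨c, hc⟩ : {x // x ∈ cells}) from Subtype.ext hb, extFun_top,
          extFun_ne cells c hc g a ha]
        have := (g ⟨a.1, mem_erase.2 ⟨ha, a.2⟩⟩).2
        omega
      · rw [extFun_ne cells c hc g a ha, extFun_ne cells c hc g b hb]
        exact hg.2.2 ⟨a.1, mem_erase.2 ⟨ha, a.2⟩⟩ ⟨b.1, mem_erase.2 ⟨hb, b.2⟩⟩ h1 h2

lemma card_top_eq
    (hmax : ∀ b ∈ cells, ¬ ((b.1 = c.1 ∧ c.2 < b.2) ∨ (b.2 = c.2 ∧ c.1 < b.1))) :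
    Nat.card {f : {x // x ∈ cells} → Fin cells.card // IsSYT cells f ∧
        ((f ⟨c, hc⟩ : ℕ) = cells.card - 1)} = sytCount (cells.erase c) := by
  classical
  refine Nat.card_congr ?_
  refine
    { toFun := fun F => ⟨resFun cells c hc F.1 F.2.1 F.2.2,
        resFun_isSYT cells c hc F.1 F.2.1 F.2.2⟩
      invFun := fun G => ⟨extFun cells c hc G.1,
        extFun_isSYT cells c hc hmax G.1 G.2, extFun_top cells c hc G.1⟩
      left_inv := ?_
      right_inv := ?_ }
  · rintro ⟨f, hf, htop⟩
    apply Subtype.ext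
    funext x
    apply Fin.ext
    by_cases hx : x.1 = c
    · rw [show x = (⟨c, hc⟩ : {x // x ∈ cells}) from Subtype.ext hx, extFun_top]
      exact htop.symm
    · rw [extFun_ne cells c hc _ x hx]
      rfl
  · rintro ⟨g, hg⟩
    apply Subtype.ext
    funext x
    apply Fin.ext
    have hx : x.1 ≠ c := Finset.ne_of_mem_erase x.2
    show (extFun cells c hc g ⟨x.1, mem_of_mem_erase x.2⟩ : ℕ) = (g x : ℕ)
    rw [extFun_ne cells c hc g ⟨x.1, mem_of_mem_erase x.2⟩ hx]

end Restrict

lemma sytCount_succ {i r : ℕ} (h1 : 1 ≤ i) (hir : i < r) :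
    sytCount (twoColShape i r) =
      sytCount (twoColShape (i - 1) r) + sytCount (twoColShape i (r - 1)) := by
  classical
  have hc1 : ((i - 1, 1) : ℕ × ℕ) ∈ twoColShape i r :=
    (mem_twoColShape hir.le).2 (Or.inr ⟨rfl, by omega⟩)
  have hc2 : ((r - 1, 0) : ℕ × ℕ) ∈ twoColShape i r :=
    (mem_twoColShape hir.le).2 (Or.inl ⟨rfl, by omega⟩)
  set P : ({x // x ∈ twoColShape i r} → Fin (twoColShape i r).card) → Prop :=
    fun f => (f ⟨(i - 1, 1), hc1⟩ : ℕ) = (twoColShape i r).card - 1 with hP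
  have e1 : {f // IsSYT (twoColShape i r) f} ≃
      {f // IsSYT (twoColShape i r) f ∧ P f} ⊕ {f // IsSYT (twoColShape i r) f ∧ ¬ P f} :=
    (Equiv.sumCompl fun F : {f // IsSYT (twoColShape i r) f} => P F.1).symm.trans
      (Equiv.sumCongr
        (Equiv.subtypeSubtypeEquivSubtypeInter (fun f => IsSYT (twoColShape i r) f) P)
        (Equiv.subtypeSubtypeEquivSubtypeInter (fun f => IsSYT (twoColShape i r) f)
          (fun f => ¬ P f)))
  rw [sytCount, Nat.card_congr e1, Nat.card_sum]
  congr 1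
  · rw [← erase_top_col2 h1 hir.le]
    exact card_top_eq (twoColShape i r) _ hc1 (by
      rintro ⟨b1, b2⟩ hb
      have := (mem_twoColShape hir.le).1 hb
      simp only at this ⊢
      omega)
  · have hiff : ∀ f, (IsSYT (twoColShape i r) f ∧ ¬ P f) ↔
        (IsSYT (twoColShape i r) f ∧ (f ⟨(r - 1, 0), hc2⟩ : ℕ) = (twoColShape i r).card - 1) := by
      intro f
      constructor
      · rintro ⟨hf, hnp⟩
        refine ⟨hf, ?_⟩
        have hcard : 1 ≤ (twoColShape i r).card := card_pos.2 ⟨_, hc1⟩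
        obtain ⟨x, hx⟩ := hf.1.2 ⟨(twoColShape i r).card - 1, by omega⟩
        have hxv : (f x : ℕ) = (twoColShape i r).card - 1 := by rw [hx]
        rcases top_loc h1 hir.le hf x hxv with h | ⟨_, h⟩
        · refine absurd ?_ hnp
          show (f ⟨(i - 1, 1), hc1⟩ : ℕ) = (twoColShape i r).card - 1
          rw [show (⟨(i - 1, 1), hc1⟩ : {p // p ∈ twoColShape i r}) =
              x from (Subtype.ext h).symm]
          exact hxv
        · rw [show (⟨(r - 1, 0), hc2⟩ : {p // p ∈ twoColShape i r}) =
              x from (Subtype.ext h).symm]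
          exact hxv
      · rintro ⟨hf, hp2⟩
        refine ⟨hf, fun hp => ?_⟩
        have : f ⟨(i - 1, 1), hc1⟩ = f ⟨(r - 1, 0), hc2⟩ := Fin.ext (hp.trans hp2.symm)
        have h4 := hf.1.1 this
        have h5 := Subtype.ext_iff.mp h4
        simp only [Prod.mk.injEq] at h5
        omega
    rw [Nat.card_congr (Equiv.subtypeEquivRight hiff)]
    rw [← erase_top_col1 hir]
    exact card_top_eq (twoColShape i r) _ hc2 (by
      rintro ⟨b1, b2⟩ hb
      have := (mem_twoColShape hir.le).1 hb
      simp only at this ⊢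
      omega)

lemma sytCount_square {i : ℕ} (h1 : 1 ≤ i) :
    sytCount (twoColShape i i) = sytCount (twoColShape (i - 1) i) := by
  classical
  have hc1 : ((i - 1, 1) : ℕ × ℕ) ∈ twoColShape i i :=
    (mem_twoColShape le_rfl).2 (Or.inr ⟨rfl, by omega⟩)
  have hiff : ∀ f, IsSYT (twoColShape i i) f ↔
      (IsSYT (twoColShape i i) f ∧ (f ⟨(i - 1, 1), hc1⟩ : ℕ) = (twoColShape i i).card - 1) := by
    intro f
    constructor
    · intro hf
      refine ⟨hf, ?_⟩
      have hcard : 1 ≤ (twoColShape i i).card := card_pos.2 ⟨_, hc1⟩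
      obtain ⟨x, hx⟩ := hf.1.2 ⟨(twoColShape i i).card - 1, by omega⟩
      have hxv : (f x : ℕ) = (twoColShape i i).card - 1 := by rw [hx]
      rcases top_loc h1 le_rfl hf x hxv with h | ⟨h, _⟩
      · rw [show (⟨(i - 1, 1), hc1⟩ : {p // p ∈ twoColShape i i}) =
            x from (Subtype.ext h).symm]
        exact hxv
      · omega
    · exact fun h => h.1
  rw [sytCount, Nat.card_congr (Equiv.subtypeEquivRight hiff)]
  rw [← erase_top_col2 h1 le_rfl]
  exact card_top_eq (twoColShape i i) _ hc1 (by
    rintro ⟨b1, b2⟩ hb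
    have := (mem_twoColShape le_rfl).1 hb
    simp only at this ⊢
    omega)

lemma sytCount_closed : ∀ k j r : ℕ, r + j + 1 = k → j + 1 ≤ r →
    sytCount (twoColShape (j + 1) r) + Nat.choose (r + j + 1) j =
      Nat.choose (r + j + 1) (j + 1) := by
  intro k
  induction k using Nat.strong_induction_on with
  | _ k IH =>
    intro j r hk hjr
    rcases eq_or_lt_of_le hjr with heq | hlt
    · -- square case : r = j + 1
      subst heq
      have hsq := sytCount_square (i := j + 1) (by omega)
      simp only [Nat.add_sub_cancel] at hsq
      rw [hsq]
      rcases Nat.eq_zero_or_pos j with rfl | hj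
      · rw [sytCount_zero]
        norm_num
      · obtain ⟨m, rfl⟩ : ∃ m, j = m + 1 := ⟨j - 1, by omega⟩
        have hIH := IH (m + 1 + 1 + m + 1) (by omega) m (m + 1 + 1) rfl (by omega)
        -- hIH : sytCount (twoColShape (m+1) (m+2)) + C(2m+3, m) = C(2m+3, m+1)
        have e1 : m + 1 + 1 + m + 1 = 2 * m + 3 := by omega
        rw [e1] at hIH
        have e2 : m + 1 + 1 + (m + 1) + 1 = 2 * m + 4 := by omega
        rw [e2]
        have p1 : Nat.choose (2 * m + 4) (m + 2) =
            Nat.choose (2 * m + 3) (m + 1) + Nat.choose (2 * m + 3) (m + 2) := by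
          have := Nat.choose_succ_succ (2 * m + 3) (m + 1)
          simp only [Nat.succ_eq_add_one] at this
          rw [show 2 * m + 3 + 1 = 2 * m + 4 from rfl, show m + 1 + 1 = m + 2 from rfl] at this
          exact this
        have p2 : Nat.choose (2 * m + 4) (m + 1) =
            Nat.choose (2 * m + 3) m + Nat.choose (2 * m + 3) (m + 1) := by
          have := Nat.choose_succ_succ (2 * m + 3) m
          simp only [Nat.succ_eq_add_one] at this
          rw [show 2 * m + 3 + 1 = 2 * m + 4 from rfl] at this
          exact this
        rw [show m + 1 + 1 = m + 2 from rfl] at hIH ⊢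
        have psym : Nat.choose (2 * m + 3) (m + 2) = Nat.choose (2 * m + 3) (m + 1) := by
          have := Nat.choose_symm (show m + 1 ≤ 2 * m + 3 by omega)
          rw [show 2 * m + 3 - (m + 1) = m + 2 by omega] at this
          exact this
        omega
    · -- i < r case
      obtain ⟨s, rfl⟩ : ∃ s, r = s + 1 := ⟨r - 1, by omega⟩
      have hjs : j + 1 ≤ s := by omega
      have hrec := sytCount_succ (i := j + 1) (r := s + 1) (by omega) (by omega)
      simp only [Nat.add_sub_cancel] at hrec
      rw [hrec]
      rcases Nat.eq_zero_or_pos j with rfl | hj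
      · -- j = 0
        rw [sytCount_zero]
        have hIH := IH (s + 0 + 1) (by omega) 0 s rfl (by omega)
        rw [show s + 0 + 1 = s + 1 by omega] at hIH
        rw [show s + 1 + 0 + 1 = s + 2 by omega]
        rw [show (0:ℕ) + 1 = 1 from rfl] at hIH ⊢
        simp only [Nat.choose_zero_right, Nat.choose_one_right] at hIH ⊢
        omega
      · obtain ⟨m, rfl⟩ : ∃ m, j = m + 1 := ⟨j - 1, by omega⟩
        have hIH1 := IH (s + (m + 1) + 1) (by omega) (m + 1) s rfl hjs
        have hIH2 := IH (s + 1 + m + 1) (by omega) m (s + 1) rfl (by omega)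
        have e0 : s + (m + 1) + 1 = s + m + 2 := by omega
        have e1 : s + 1 + m + 1 = s + m + 2 := by omega
        rw [e0] at hIH1
        rw [e1] at hIH2
        rw [show s + 1 + (m + 1) + 1 = s + m + 3 by omega]
        rw [show m + 1 + 1 = m + 2 from rfl] at hIH1 ⊢
        have p1 : Nat.choose (s + m + 3) (m + 2) =
            Nat.choose (s + m + 2) (m + 1) + Nat.choose (s + m + 2) (m + 2) := by
          have := Nat.choose_succ_succ (s + m + 2) (m + 1)
          simp only [Nat.succ_eq_add_one] at this
          rw [show s + m + 2 + 1 = s + m + 3 from rfl, show m + 1 + 1 = m + 2 from rfl] at this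
          exact this
        have p2 : Nat.choose (s + m + 3) (m + 1) =
            Nat.choose (s + m + 2) m + Nat.choose (s + m + 2) (m + 1) := by
          have := Nat.choose_succ_succ (s + m + 2) m
          simp only [Nat.succ_eq_add_one] at this
          rw [show s + m + 2 + 1 = s + m + 3 from rfl] at this
          exact this
        omega

lemma sytCount_formula {i r : ℕ} (h1 : 1 ≤ i) (hir : i ≤ r) :
    sytCount (twoColShape i r) + Nat.choose (r + i) (i - 1) = Nat.choose (r + i) i := by
  obtain ⟨j, rfl⟩ : ∃ j, i = j + 1 := ⟨i - 1, by omega⟩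
  have := sytCount_closed (r + j + 1) j r rfl hir
  simp only [Nat.add_sub_cancel]
  rw [show r + (j + 1) = r + j + 1 by omega]
  exact this

lemma alt_sum_choose (m : ℕ) (hm : 1 ≤ m) (k : ℕ) :
    ∑ x ∈ Finset.range (k + 1), ((-1 : ℂ)) ^ x * (Nat.choose m x : ℂ) =
      (-1) ^ k * (Nat.choose (m - 1) k : ℂ) := by
  induction k with
  | zero => simp
  | succ k ih =>
    rw [Finset.sum_range_succ, ih]
    have hp : Nat.choose m (k + 1) = Nat.choose (m - 1) k + Nat.choose (m - 1) (k + 1) := by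
      have := Nat.choose_succ_succ (m - 1) k
      simp only [Nat.succ_eq_add_one] at this
      rw [show m - 1 + 1 = m by omega] at this
      exact this
    rw [hp]
    push_cast
    ring

lemma abel_sum (f g : ℕ → ℂ) (K : ℕ) :
    ∑ x ∈ Finset.range (K + 1), f x * (if x = 0 then g 0 else g x - g (x - 1)) =
      f K * g K + ∑ x ∈ Finset.range K, (f x - f (x + 1)) * g x := by
  induction K with
  | zero => simp
  | succ K ih =>
    rw [Finset.sum_range_succ, ih, Finset.sum_range_succ]
    simp only [Nat.succ_ne_zero, if_false, Nat.add_sub_cancel]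
    ring

lemma key_sum (n : ℕ) (hn : 2 ≤ n) :
    ∑ i ∈ Finset.range n, (1 + ((n : ℂ) - (i : ℂ)) * (-1) ^ (n - i)) *
      (sytCount (twoColShape i (2 * n - 1 - i)) : ℂ) = (Nat.choose (2 * n - 1) n : ℂ) := by
  classical
  have hD : ∀ i ∈ Finset.range n, (sytCount (twoColShape i (2 * n - 1 - i)) : ℂ) =
      (if i = 0 then (Nat.choose (2 * n - 1) 0 : ℂ)
        else (Nat.choose (2 * n - 1) i : ℂ) - (Nat.choose (2 * n - 1) (i - 1) : ℂ)) := by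
    intro i hi
    rw [Finset.mem_range] at hi
    rcases Nat.eq_zero_or_pos i with rfl | hipos
    · simp [sytCount_zero]
    · rw [if_neg (by omega)]
      have hform := sytCount_formula (i := i) (r := 2 * n - 1 - i) hipos (by omega)
      rw [show 2 * n - 1 - i + i = 2 * n - 1 by omega] at hform
      have hc := congrArg (fun t : ℕ => (t : ℂ)) hform
      push_cast at hc
      linear_combination hc
  rw [Finset.sum_congr rfl (fun i hi => by rw [hD i hi])]
  obtain ⟨K, rfl⟩ : ∃ K, n = K + 1 := ⟨n - 1, by omega⟩
  have hK1 : 1 ≤ K := by omega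
  obtain ⟨m, hmdef⟩ : ∃ m, m = 2 * (K + 1) - 1 := ⟨_, rfl⟩
  rw [← hmdef]
  have hm1 : 3 ≤ m := by omega
  have hmc : (m : ℂ) = 2 * (K : ℂ) + 1 := by
    rw [show m = 2 * K + 1 by omega]
    push_cast
    ring
  rw [abel_sum (fun x => 1 + (((K + 1 : ℕ) : ℂ) - (x : ℂ)) * (-1) ^ (K + 1 - x))
    (fun x => (Nat.choose m x : ℂ)) K]
  have hfK : (1 + (((K + 1 : ℕ) : ℂ) - (K : ℂ)) * (-1) ^ (K + 1 - K)) = 0 := by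
    rw [show K + 1 - K = 1 by omega]
    push_cast
    ring
  have hsign : ∀ x, x ≤ K → ((-1 : ℂ)) ^ (K - x) = (-1) ^ K * (-1) ^ x := by
    intro x hx
    rw [← pow_add, show K + x = (K - x) + 2 * x by omega, pow_add, pow_mul]
    norm_num
  have hterm : ∀ x ∈ Finset.range K,
      ((1 + (((K + 1 : ℕ) : ℂ) - (x : ℂ)) * (-1) ^ (K + 1 - x)) -
        (1 + (((K + 1 : ℕ) : ℂ) - ((x + 1 : ℕ) : ℂ)) * (-1) ^ (K + 1 - (x + 1)))) *
        (Nat.choose m x : ℂ) =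
      (-1) * ((-1 : ℂ) ^ (K - x) * (((m : ℂ) - 2 * (x : ℂ)) * (Nat.choose m x : ℂ))) := by
    intro x hx
    rw [Finset.mem_range] at hx
    rw [show K + 1 - x = (K - x) + 1 by omega, show K + 1 - (x + 1) = K - x by omega,
      pow_succ, hmc]
    push_cast
    ring
  rw [Finset.sum_congr rfl hterm]
  have hT : ∑ x ∈ Finset.range K,
      (-1) * ((-1 : ℂ) ^ (K - x) * (((m : ℂ) - 2 * (x : ℂ)) * (Nat.choose m x : ℂ))) =
      (-1) ^ (K + 1) *
        ∑ x ∈ Finset.range K, (-1 : ℂ) ^ x * (((m : ℂ) - 2 * (x : ℂ)) * (Nat.choose m x : ℂ)) := by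
    rw [Finset.mul_sum]
    refine Finset.sum_congr rfl fun x hx => ?_
    rw [hsign x (le_of_lt (Finset.mem_range.1 hx)), pow_succ]
    ring
  rw [hT, hfK, zero_mul, zero_add]
  obtain ⟨L, hKL⟩ : ∃ L, K = L + 1 := ⟨K - 1, by omega⟩
  -- the full alternating sum over range (K+1) vanishes
  have hB : ∑ x ∈ Finset.range (K + 1), (-1 : ℂ) ^ x * ((x : ℂ) * (Nat.choose m x : ℂ)) =
      -(m : ℂ) * ((-1) ^ L * (Nat.choose (m - 2) L : ℂ)) := by
    have hmul : ∀ x : ℕ, ((x : ℂ) + 1) * (Nat.choose m (x + 1) : ℂ) =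
        (m : ℂ) * (Nat.choose (m - 1) x : ℂ) := by
      intro x
      have h := Nat.add_one_mul_choose_eq (m - 1) x
      rw [show m - 1 + 1 = m by omega] at h
      have hc := congrArg (fun t : ℕ => (t : ℂ)) h
      push_cast at hc
      linear_combination -hc
    rw [Finset.sum_range_succ']
    have hz : (-1 : ℂ) ^ 0 * (((0 : ℕ) : ℂ) * (Nat.choose m 0 : ℂ)) = 0 := by norm_num
    rw [hz, add_zero]
    have hcong : ∀ x ∈ Finset.range K,
        (-1 : ℂ) ^ (x + 1) * (((x + 1 : ℕ) : ℂ) * (Nat.choose m (x + 1) : ℂ)) =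
          (-(m : ℂ)) * ((-1) ^ x * (Nat.choose (m - 1) x : ℂ)) := by
      intro x hx
      have hm2 := hmul x
      push_cast
      rw [pow_succ]
      linear_combination (-1 : ℂ) ^ x * (-1) * hm2
    rw [Finset.sum_congr rfl hcong, ← Finset.mul_sum]
    rw [hKL, alt_sum_choose (m - 1) (by omega) L, show m - 1 - 1 = m - 2 by omega]
  have hsplit2 : ∑ x ∈ Finset.range (K + 1),
      (-1 : ℂ) ^ x * (((m : ℂ) - 2 * (x : ℂ)) * (Nat.choose m x : ℂ)) =
      (m : ℂ) * (∑ x ∈ Finset.range (K + 1), (-1 : ℂ) ^ x * (Nat.choose m x : ℂ)) -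
        2 * (∑ x ∈ Finset.range (K + 1), (-1 : ℂ) ^ x * ((x : ℂ) * (Nat.choose m x : ℂ))) := by
    rw [Finset.mul_sum, Finset.mul_sum, ← Finset.sum_sub_distrib]
    exact Finset.sum_congr rfl fun x _ => by ring
  have hnat : Nat.choose (m - 1) K = 2 * Nat.choose (m - 2) L := by
    have hp := Nat.choose_succ_succ (m - 2) L
    simp only [Nat.succ_eq_add_one] at hp
    rw [show m - 2 + 1 = m - 1 by omega, show L + 1 = K by omega] at hp
    have hs := Nat.choose_symm (show L ≤ m - 2 by omega)
    rw [show m - 2 - L = K by omega] at hs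
    omega
  have hA := alt_sum_choose m (by omega) K
  have hQ1 : ∑ x ∈ Finset.range (K + 1),
      (-1 : ℂ) ^ x * (((m : ℂ) - 2 * (x : ℂ)) * (Nat.choose m x : ℂ)) = 0 := by
    rw [hsplit2, hA, hB]
    have hnatc : (Nat.choose (m - 1) K : ℂ) = 2 * (Nat.choose (m - 2) L : ℂ) := by
      exact_mod_cast congrArg (fun t : ℕ => (t : ℂ)) hnat
    rw [hnatc, hKL, pow_succ]
    ring
  have hQsplit := Finset.sum_range_succ
    (fun x => (-1 : ℂ) ^ x * (((m : ℂ) - 2 * (x : ℂ)) * (Nat.choose m x : ℂ))) K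
  rw [hQ1] at hQsplit
  have hone : (m : ℂ) - 2 * (K : ℂ) = 1 := by rw [hmc]; ring
  have hQK : ∑ x ∈ Finset.range K,
      (-1 : ℂ) ^ x * (((m : ℂ) - 2 * (x : ℂ)) * (Nat.choose m x : ℂ)) =
      -((-1 : ℂ) ^ K * (Nat.choose m K : ℂ)) := by
    have hlast : (-1 : ℂ) ^ K * (((m : ℂ) - 2 * (K : ℂ)) * (Nat.choose m K : ℂ)) =
        (-1 : ℂ) ^ K * (Nat.choose m K : ℂ) := by rw [hone]; ring
    rw [hlast] at hQsplit
    linear_combination -hQsplit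
  rw [hQK]
  have hsym : Nat.choose m K = Nat.choose m (K + 1) := by
    have hs := Nat.choose_symm (show K + 1 ≤ m by omega)
    rw [show m - (K + 1) = K by omega] at hs
    exact hs
  have hsq : ((-1 : ℂ)) ^ (K + 1) * (-1) ^ (K + 1) = 1 := by
    rw [← mul_pow]
    norm_num
  rw [hsym]
  calc (-1 : ℂ) ^ (K + 1) * -((-1 : ℂ) ^ K * (Nat.choose m (K + 1) : ℂ))
      = ((-1 : ℂ) ^ (K + 1) * (-1) ^ (K + 1)) * (Nat.choose m (K + 1) : ℂ) := by
        rw [pow_succ]; ring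
    _ = (Nat.choose m (K + 1) : ℂ) := by rw [hsq, one_mul]

/-- For `n ≥ 2`, the trace of the operator `φ` on `V_{n,3}` equals
`binom(2n-1, n)`, and it also equals
`∑_{i=0}^{n-1} (1 + (n-i)(-1)^{n-i}) · f^{2^i 1^{2n-1-2i}}`, where `f^λ` is the
number of standard Young tableaux of shape `λ`. -/
theorem trace_phi (n : ℕ) (hn : 2 ≤ n) :
    Matrix.trace (phiMatrix n) = (Nat.choose (2 * n - 1) n : ℂ) ∧
    Matrix.trace (phiMatrix n) =
      ∑ i ∈ Finset.range n,
        (1 + ((n : ℂ) - (i : ℂ)) * (-1) ^ (n - i)) *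
          (sytCount (twoColShape i (2 * n - 1 - i)) : ℂ) := by
  have htr : Matrix.trace (phiMatrix n) = (Nat.choose (2 * n - 1) n : ℂ) := by
    rw [Matrix.trace]
    have hdiag : ∀ S : SubsetIdx n, Matrix.diag (phiMatrix n) S = 1 := by
      intro S
      simp [Matrix.diag, phiMatrix, phiCoeff]
    rw [Finset.sum_congr rfl (fun S _ => hdiag S), Finset.sum_const, Finset.card_univ]
    have hcardidx : Fintype.card (SubsetIdx n) = Nat.choose (2 * n - 1) n := by
      rw [Fintype.card_coe, Finset.card_powersetCard, Nat.card_Icc]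
      congr 1
    rw [hcardidx]
    simp
  exact ⟨htr, by rw [htr, key_sum n hn]⟩
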